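/- Let A be a positive finite-rank operator on a complex Hilbert space H. Then A is a finite sum of (rank-one) projections if and only if Tr(A) is a nonnegative integer and Tr(A) ≥ rank(A) (the trace of the range projection of A). -/

import Mathlib

open scoped InnerProductSpace

variable {H : Type*} [NormedAddCommGroup H] [InnerProductSpace ℂ H] [CompleteSpace H]

/-- The rank-one operator `x ⊗ x : y ↦ ⟨x, y⟩ • x` associated to a vector `x`. -/
noncomputable def rankOne (x : H) : H →L[ℂ] H := (innerSL ℂ x).smulRight x

/-- A rank-one (orthogonal) projection: the projection onto the span of a unit vector. -/
def IsRankOneProjection (P : H →L[ℂ] H) : Prop := ∃ x : H, ‖x‖ = 1 ∧ P = rankOne x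

section Fillmore

set_option linter.unusedSectionVars false
set_option maxHeartbeats 1000000

lemma rankOne_apply (x y : H) : rankOne x y = ⟪x, y⟫_ℂ • x := rfl

lemma hasSum_rankOne {ι : Type*} (b : HilbertBasis ι ℂ H) (x : H) :
    HasSum (fun j => ⟪b j, rankOne x (b j)⟫_ℂ) ⟪x, x⟫_ℂ := by
  have := b.hasSum_inner_mul_inner x x
  convert this using 2 with j
  · rfl
  simp [rankOne, inner_smul_right]

lemma trace_diag {ι : Type*} (b : HilbertBasis ι ℂ H) {n : ℕ} (c : Fin n → ℝ) (x : Fin n → H)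
    (hx : ∀ i, ‖x i‖ = 1) :
    (∑' j, (⟪b j, (∑ i, (c i : ℂ) • rankOne (x i)) (b j)⟫_ℂ).re) = ∑ i, c i := by
  have h : HasSum (fun j => ⟪b j, (∑ i, (c i : ℂ) • rankOne (x i)) (b j)⟫_ℂ)
      (∑ i, (c i : ℂ) * ⟪x i, x i⟫_ℂ) := by
    have := hasSum_sum (s := (Finset.univ : Finset (Fin n)))
      (f := fun i j => (c i : ℂ) * ⟪b j, rankOne (x i) (b j)⟫_ℂ)
      (a := fun i => (c i : ℂ) * ⟪x i, x i⟫_ℂ)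
      (fun i _ => (hasSum_rankOne b (x i)).mul_left _)
    convert this using 2 with j
    simp [ContinuousLinearMap.sum_apply, inner_sum]
  have hre := RCLike.hasSum_re ℂ h
  have : (∑ i, (c i : ℂ) * ⟪x i, x i⟫_ℂ) = ((∑ i, c i : ℝ) : ℂ) := by
    push_cast
    refine Finset.sum_congr rfl fun i _ => ?_
    rw [inner_self_eq_norm_sq_to_K, hx i]
    norm_num
  rw [this] at hre
  simpa using hre.tsum_eq

lemma rank_diag_le {n : ℕ} (c : Fin n → ℝ) (x : Fin n → H) :
    Module.finrank ℂ (LinearMap.range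
      (((∑ i, (c i : ℂ) • rankOne (x i)) : H →L[ℂ] H) : H →ₗ[ℂ] H)) ≤ n := by
  haveI : Module.Finite ℂ (Submodule.span ℂ (Set.range x)) :=
    Module.Finite.span_of_finite ℂ (Set.finite_range x)
  have hle : LinearMap.range (((∑ i, (c i : ℂ) • rankOne (x i)) : H →L[ℂ] H) : H →ₗ[ℂ] H) ≤
      Submodule.span ℂ (Set.range x) := by
    rintro z ⟨y, rfl⟩
    simp only [ContinuousLinearMap.coe_coe, ContinuousLinearMap.sum_apply,
      ContinuousLinearMap.smul_apply]
    refine Submodule.sum_mem _ fun i _ => Submodule.smul_mem _ _ ?_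
    rw [rankOne_apply]
    exact Submodule.smul_mem _ _ (Submodule.subset_span ⟨i, rfl⟩)
  calc Module.finrank ℂ (LinearMap.range
        (((∑ i, (c i : ℂ) • rankOne (x i)) : H →L[ℂ] H) : H →ₗ[ℂ] H))
      ≤ Module.finrank ℂ (Submodule.span ℂ (Set.range x)) := Submodule.finrank_mono hle
    _ ≤ n := by simpa [Set.finrank] using finrank_range_le_card (R := ℂ) x

lemma diag_decomp (A : H →L[ℂ] H) (hA : A.IsPositive)
    (hfr : FiniteDimensional ℂ (LinearMap.range (A : H →ₗ[ℂ] H))) :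
    ∃ (e : Fin (Module.finrank ℂ (LinearMap.range (A : H →ₗ[ℂ] H))) → H)
      (μ : Fin (Module.finrank ℂ (LinearMap.range (A : H →ₗ[ℂ] H))) → ℝ),
      Orthonormal ℂ e ∧ (∀ i, 0 < μ i) ∧ A = ∑ i, (μ i : ℂ) • rankOne (e i) := by
  set V := LinearMap.range (A : H →ₗ[ℂ] H) with hV
  have hsym0 : (A : H →ₗ[ℂ] H).IsSymmetric := hA.isSelfAdjoint.isSymmetric
  have hsym : ∀ u v : H, ⟪A u, v⟫_ℂ = ⟪u, A v⟫_ℂ := fun u v => hsym0 u v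
  have hmapsto : ∀ v : H, v ∈ V → A v ∈ V := fun v _ => ⟨v, rfl⟩
  let T : V →ₗ[ℂ] V := (A : H →ₗ[ℂ] H).restrict (fun v hv => hmapsto v hv)
  have hTapp : ∀ v : V, (T v : H) = A (v : H) := fun v => rfl
  have hT : T.IsSymmetric := by
    intro u v
    have h := hsym (u : H) (v : H)
    simpa [Submodule.coe_inner, hTapp] using h
  have hn : Module.finrank ℂ V = Module.finrank ℂ V := rfl
  set eb := hT.eigenvectorBasis hn with heb
  set μ := hT.eigenvalues hn with hμ
  have heig : ∀ i, T (eb i) = (μ i : ℂ) • eb i := fun i => hT.apply_eigenvectorBasis hn i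
  refine ⟨fun i => (eb i : H), μ, ?_, ?_, ?_⟩
  · have := eb.orthonormal
    constructor
    · intro i; exact this.1 i
    · intro i j hij
      simpa [Submodule.coe_inner] using this.2 hij
  · intro i
    have hnorm : ‖(eb i : H)‖ = 1 := by exact eb.orthonormal.1 i
    have hAe : A (eb i : H) = (μ i : ℂ) • (eb i : H) := by
      have := congrArg (Subtype.val) (heig i)
      simpa [hTapp] using this
    have h0 : 0 ≤ μ i := by
      have h0 := hA.inner_nonneg_right (eb i : H)
      rw [hAe, inner_smul_right, inner_self_eq_norm_sq_to_K, hnorm] at h0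
      simpa using h0
    rcases h0.lt_or_eq with h | h
    · exact h
    · exfalso
      have hz : A (eb i : H) = 0 := by rw [hAe, ← h]; simp
      obtain ⟨w, hw⟩ := (eb i).2
      have hw' : A w = (eb i : H) := hw
      have h1 : ⟪(eb i : H), (eb i : H)⟫_ℂ = 0 := by
        rw [← hw', hsym w, hw', hz, inner_zero_right]
      have h2 : (eb i : H) = 0 := inner_self_eq_zero.mp h1
      rw [h2, norm_zero] at hnorm; norm_num at hnorm
  · have hVc : ∀ y : H, y ∈ Vᗮ → A y = 0 := by
      intro y hy
      have h1 : ⟪A y, A y⟫_ℂ = 0 := by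
        rw [hsym y (A y)]
        have h2 : ⟪A (A y), y⟫_ℂ = 0 := hy _ (hmapsto _ ⟨y, rfl⟩)
        rw [← inner_conj_symm, h2, map_zero]
      exact inner_self_eq_zero.mp h1
    have key : ∀ zv : V, A (zv : H) = ∑ i, (μ i : ℂ) • (⟪(eb i : H), (zv : H)⟫_ℂ • (eb i : H)) := by
      intro zv
      have hexp : (∑ i, ⟪eb i, zv⟫_ℂ • eb i) = zv := eb.sum_repr' zv
      have hTz : T zv = ∑ i, ⟪eb i, zv⟫_ℂ • ((μ i : ℂ) • eb i) := by
        conv_lhs => rw [← hexp]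
        rw [map_sum]
        exact Finset.sum_congr rfl fun i _ => by rw [map_smul, heig i]
      have hTz' := congrArg (Subtype.val) hTz
      rw [hTapp] at hTz'
      rw [hTz']
      push_cast
      refine Finset.sum_congr rfl fun i _ => ?_
      rw [smul_comm]
      rfl
    ext y
    have hdec : (V.orthogonalProjectionOnto y : H) + (Vᗮ.orthogonalProjectionOnto y : H) = y :=
      V.starProjection_add_starProjection_orthogonal y
    set p := (V.orthogonalProjectionOnto y) with hp
    set q := (Vᗮ.orthogonalProjectionOnto y : H) with hq
    have hqm : q ∈ Vᗮ := (Vᗮ.orthogonalProjectionOnto y).2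
    have hrhs : (∑ i, (μ i : ℂ) • rankOne ((eb i : H))) y
        = ∑ i, (μ i : ℂ) • (⟪(eb i : H), y⟫_ℂ • (eb i : H)) := by
      simp [ContinuousLinearMap.sum_apply, rankOne]
    rw [ContinuousLinearMap.coe_sum'] at *
    rw [hrhs]
    have hAy : A y = A (p : H) := by
      conv_lhs => rw [← hdec]
      rw [map_add, hVc q hqm, add_zero]
    rw [hAy, key p]
    refine Finset.sum_congr rfl fun i _ => ?_
    have hinner : ⟪(eb i : H), y⟫_ℂ = ⟪(eb i : H), (p : H)⟫_ℂ := by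
      conv_lhs => rw [← hdec]
      rw [inner_add_right, Submodule.inner_right_of_mem_orthogonal (eb i).2 hqm, add_zero]
    rw [hinner]

lemma norm_combo (v w : H) (hv : ‖v‖ = 1) (hw : ‖w‖ = 1) (hvw : ⟪v, w⟫_ℂ = 0)
    (c s : ℝ) (hcs : c^2 + s^2 = 1) : ‖(c:ℂ) • v + (s:ℂ) • w‖ = 1 := by
  have h : ‖(c:ℂ) • v + (s:ℂ) • w‖^2 = 1 := by
    rw [@norm_add_sq ℂ]
    have h1 : ⟪(c:ℂ) • v, (s:ℂ) • w⟫_ℂ = 0 := by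
      rw [inner_smul_left, inner_smul_right, hvw]; ring
    rw [h1]
    simp [norm_smul, hv, hw]
    nlinarith [sq_abs c, sq_abs s]
  nlinarith [norm_nonneg ((c:ℂ) • v + (s:ℂ) • w)]

lemma twobytwo (v w : H) {a b : ℝ} (ha : 1 < a) (hb0 : 0 < b) (hb1 : b < 1) :
    ∃ c s α β : ℝ, c^2 + s^2 = 1 ∧ α^2 + β^2 = 1 ∧
      (a:ℂ) • rankOne v + (b:ℂ) • rankOne w
        = rankOne ((c:ℂ) • v + (s:ℂ) • w)
          + ((a + b - 1 : ℝ) : ℂ) • rankOne ((α:ℂ) • v + ((-β : ℝ):ℂ) • w) := by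
  have hD0 : (0:ℝ) < a - b := by linarith
  have ht0 : (0:ℝ) < a + b - 1 := by linarith
  set D := a - b with hD
  set t := a + b - 1 with ht
  set c2 := a * (1 - b) / D with hc2
  set s2 := b * (a - 1) / D with hs2
  set α2 := a * (a - 1) / (D * t) with hα2
  set β2 := b * (1 - b) / (D * t) with hβ2
  have hc2_0 : 0 ≤ c2 := div_nonneg (by nlinarith) hD0.le
  have hs2_0 : 0 ≤ s2 := div_nonneg (by nlinarith) hD0.le
  have hα2_0 : 0 ≤ α2 := div_nonneg (by nlinarith) (by positivity)
  have hβ2_0 : 0 ≤ β2 := div_nonneg (by nlinarith) (by positivity)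
  refine ⟨Real.sqrt c2, Real.sqrt s2, Real.sqrt α2, Real.sqrt β2, ?_, ?_, ?_⟩
  · rw [Real.sq_sqrt hc2_0, Real.sq_sqrt hs2_0, hc2, hs2]; field_simp; ring
  · rw [Real.sq_sqrt hα2_0, Real.sq_sqrt hβ2_0, hα2, hβ2]; field_simp; ring
  · have h2 : (Real.sqrt c2)^2 + t * (Real.sqrt α2)^2 = a := by
      rw [Real.sq_sqrt hc2_0, Real.sq_sqrt hα2_0, hc2, hα2]; field_simp; ring
    have h3 : (Real.sqrt s2)^2 + t * (Real.sqrt β2)^2 = b := by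
      rw [Real.sq_sqrt hs2_0, Real.sq_sqrt hβ2_0, hs2, hβ2]; field_simp; ring
    have h4 : t * (Real.sqrt α2 * Real.sqrt β2) = Real.sqrt c2 * Real.sqrt s2 := by
      rw [← Real.sqrt_mul hα2_0, ← Real.sqrt_mul hc2_0]
      rw [show t = Real.sqrt (t^2) by rw [Real.sqrt_sq ht0.le]]
      rw [← Real.sqrt_mul (by positivity)]
      congr 1
      rw [hα2, hβ2, hc2, hs2]; field_simp
    set c := Real.sqrt c2
    set s := Real.sqrt s2
    set α := Real.sqrt α2
    set β := Real.sqrt β2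
    ext y
    simp only [ContinuousLinearMap.add_apply, ContinuousLinearMap.smul_apply, rankOne_apply,
      inner_add_left, inner_smul_left, Complex.conj_ofReal]
    push_cast
    have h2' : (c:ℂ)^2 + (t:ℂ) * (α:ℂ)^2 = (a:ℂ) := by exact_mod_cast congrArg Complex.ofReal h2
    have h3' : (s:ℂ)^2 + (t:ℂ) * (β:ℂ)^2 = (b:ℂ) := by exact_mod_cast congrArg Complex.ofReal h3
    have h4' : (t:ℂ) * ((α:ℂ) * (β:ℂ)) = (c:ℂ) * (s:ℂ) := by
      exact_mod_cast congrArg Complex.ofReal h4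
    match_scalars
    · linear_combination (-⟪v, y⟫_ℂ) * h2' + ⟪w, y⟫_ℂ * h4'
    · linear_combination (-⟪w, y⟫_ℂ) * h3' + ⟪v, y⟫_ℂ * h4'

lemma step {k n : ℕ} (e : Fin (n+1) → H) (μ : Fin (n+1) → ℝ) (hON : Orthonormal ℂ e)
    (hpos : ∀ i, 0 < μ i) (hsum : (∑ i, μ i) = (k+1 : ℕ)) (hr : n + 1 ≤ k + 1) :
    ∃ (r' : ℕ) (e' : Fin r' → H) (μ' : Fin r' → ℝ) (Q : H →L[ℂ] H),
      Orthonormal ℂ e' ∧ (∀ i, 0 < μ' i) ∧ (∑ i, μ' i) = (k : ℕ) ∧ r' ≤ k ∧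
      IsRankOneProjection Q ∧
      (∑ i, (μ i : ℂ) • rankOne (e i)) = Q + ∑ i, (μ' i : ℂ) • rankOne (e' i) := by
  classical
  by_cases hone : ∃ i, μ i = 1
  · -- Case A : drop index i
    obtain ⟨i, hi⟩ := hone
    refine ⟨n, e ∘ i.succAbove, μ ∘ i.succAbove, rankOne (e i), ?_, ?_, ?_, ?_, ?_, ?_⟩
    · exact hON.comp _ (Fin.succAbove_right_injective)
    · intro l; exact hpos _
    · have h := Fin.sum_univ_succAbove μ i
      rw [h, hi] at hsum
      simp only [Function.comp]
      push_cast at hsum ⊢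
      linarith
    · omega
    · exact ⟨e i, hON.1 i, rfl⟩
    · rw [Fin.sum_univ_succAbove (fun l => (μ l : ℂ) • rankOne (e l)) i, hi]
      push_cast
      rw [one_smul]
      rfl
  · by_cases hbig : (∃ i, 1 < μ i) ∧ n + 1 ≤ k
    · -- Case B : subtract a projection at i
      obtain ⟨⟨i, hi⟩, hnk⟩ := hbig
      refine ⟨n+1, e, Function.update μ i (μ i - 1), rankOne (e i), hON, ?_, ?_, hnk, ?_, ?_⟩
      · intro l
        rcases eq_or_ne l i with rfl | hl
        · simp; linarith
        · simp [Function.update_of_ne hl]; exact hpos l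
      · rw [Finset.sum_update_of_mem (Finset.mem_univ i), Finset.sdiff_singleton_eq_erase]
        rw [← Finset.add_sum_erase _ μ (Finset.mem_univ i)] at hsum
        push_cast at hsum ⊢
        linarith
      · exact ⟨e i, hON.1 i, rfl⟩
      · rw [← Finset.add_sum_erase _ (fun l => (μ l : ℂ) • rankOne (e l)) (Finset.mem_univ i),
            ← Finset.add_sum_erase _
              (fun l => ((Function.update μ i (μ i - 1) l : ℝ) : ℂ) • rankOne (e l))
              (Finset.mem_univ i)]
        have h1 : ∑ l ∈ Finset.univ.erase i,
              ((Function.update μ i (μ i - 1) l : ℝ) : ℂ) • rankOne (e l)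
            = ∑ l ∈ Finset.univ.erase i, (μ l : ℂ) • rankOne (e l) := by
          refine Finset.sum_congr rfl fun l hl => ?_
          rw [Function.update_of_ne (Finset.ne_of_mem_erase hl)]
        rw [h1, Function.update_self]
        push_cast
        rw [sub_smul, one_smul]
        abel
    · -- Case C : two-dimensional rotation
      push_neg at hbig
      have hex : ∃ i, 1 < μ i := by
        by_contra hno
        push_neg at hno
        have hlt' : ∀ i, μ i < 1 := fun i => lt_of_le_of_ne (hno i) (fun h => hone ⟨i, h⟩)
        have hlt : (∑ i, μ i) < ∑ _i : Fin (n+1), (1:ℝ) :=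
          Finset.sum_lt_sum_of_nonempty (Finset.univ_nonempty) (fun i _ => hlt' i)
        rw [hsum] at hlt
        simp only [Finset.sum_const, Finset.card_univ, Fintype.card_fin, nsmul_eq_mul,
          mul_one] at hlt
        have : (k:ℝ) + 1 < (n:ℝ) + 1 := by push_cast at hlt; linarith
        have : k < n := by exact_mod_cast (by linarith : (k:ℝ) < n)
        omega
      obtain ⟨i, hi⟩ := hex
      have h5 := hbig ⟨i, hi⟩
      have hnk : k = n := by omega
      subst hnk
      have hexj : ∃ j, j ≠ i ∧ μ j < 1 := by
        by_contra hno
        push_neg at hno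
        have hge : ∑ l ∈ Finset.univ.erase i, (1:ℝ) ≤ ∑ l ∈ Finset.univ.erase i, μ l :=
          Finset.sum_le_sum (fun l hl => hno l (Finset.ne_of_mem_erase hl))
        rw [← Finset.add_sum_erase _ μ (Finset.mem_univ i)] at hsum
        have hcard : (Finset.univ.erase i).card = k := by
          rw [Finset.card_erase_of_mem (Finset.mem_univ i)]; simp
        rw [Finset.sum_const, hcard] at hge
        push_cast at hsum
        simp only [nsmul_eq_mul, mul_one] at hge
        linarith
      obtain ⟨j, hji, hj1⟩ := hexj
      obtain ⟨c, s, α, β, hcs, hαβ, hop⟩ := twobytwo (e i) (e j) hi (hpos j) hj1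
      have hiter := orthonormal_iff_ite.mp hON
      have hij0 : ⟪e i, e j⟫_ℂ = 0 := by
        have := hiter i j; simpa [hji.symm] using this
      set x := (c:ℂ) • e i + (s:ℂ) • e j with hx
      set u := (α:ℂ) • e i + ((-β : ℝ):ℂ) • e j with hu
      set t := μ i + μ j - 1 with hT
      have ht0 : 0 < t := by rw [hT]; linarith [hpos j]
      have hnormu : ‖u‖ = 1 := by
        rw [hu]
        exact norm_combo (e i) (e j) (hON.1 i) (hON.1 j) hij0 α (-β) (by nlinarith)
      have huu : ⟪u, u⟫_ℂ = 1 := by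
        rw [@inner_self_eq_norm_sq_to_K ℂ, hnormu]; norm_num
      have hul : ∀ l, l ≠ i → l ≠ j → ⟪u, e l⟫_ℂ = 0 := by
        intro l hli hlj
        rw [hu, inner_add_left, inner_smul_left, inner_smul_left]
        have h1 := hiter i l
        have h2 := hiter j l
        rw [if_neg (by exact fun h => hli h.symm)] at h1
        rw [if_neg (by exact fun h => hlj h.symm)] at h2
        rw [h1, h2]
        ring
      have hlu : ∀ l, l ≠ i → l ≠ j → ⟪e l, u⟫_ℂ = 0 := by
        intro l hli hlj
        rw [← inner_conj_symm, hul l hli hlj, map_zero]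
      refine ⟨k, (Function.update e i u) ∘ j.succAbove, (Function.update μ i t) ∘ j.succAbove,
        rankOne x, ?_, ?_, ?_, le_rfl, ?_, ?_⟩
      · rw [orthonormal_iff_ite]
        intro p q
        simp only [Function.comp]
        have hPj : j.succAbove p ≠ j := Fin.succAbove_ne j p
        have hQj : j.succAbove q ≠ j := Fin.succAbove_ne j q
        rcases eq_or_ne (j.succAbove p) i with hp | hp <;>
          rcases eq_or_ne (j.succAbove q) i with hq | hq
        · have hpq : p = q := Fin.succAbove_right_injective (hp.trans hq.symm)
          rw [hp, hq, Function.update_self, if_pos hpq]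
          exact huu
        · have hpq : p ≠ q := fun h => hq (h ▸ hp)
          rw [hp, Function.update_self, Function.update_of_ne hq, if_neg hpq]
          exact hul _ hq hQj
        · have hpq : p ≠ q := fun h => hp (h ▸ hq)
          rw [hq, Function.update_self, Function.update_of_ne hp, if_neg hpq]
          exact hlu _ hp hPj
        · rw [Function.update_of_ne hp, Function.update_of_ne hq, hiter]
          simp [Fin.succAbove_right_inj]
      · intro l
        simp only [Function.comp]
        rcases eq_or_ne (j.succAbove l) i with hp | hp
        · rw [hp, Function.update_self]; exact ht0
        · rw [Function.update_of_ne hp]; exact hpos _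
      · have hs1 := Fin.sum_univ_succAbove (Function.update μ i t) j
        rw [Finset.sum_update_of_mem (Finset.mem_univ i), Finset.sdiff_singleton_eq_erase,
          Function.update_of_ne hji] at hs1
        rw [← Finset.add_sum_erase _ μ (Finset.mem_univ i)] at hsum
        have : ∑ l : Fin k, (Function.update μ i t ∘ j.succAbove) l
            = t + ∑ l ∈ Finset.univ.erase i, μ l - μ j := by
          simp only [Function.comp] at hs1 ⊢
          linarith
        rw [this, hT]
        push_cast at hsum ⊢
        linarith
      · exact ⟨x, norm_combo (e i) (e j) (hON.1 i) (hON.1 j) hij0 c s hcs, rfl⟩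
      · set F : Fin (k+1) → (H →L[ℂ] H) := fun l => (μ l : ℂ) • rankOne (e l) with hF
        set G : Fin (k+1) → (H →L[ℂ] H) :=
          fun l => ((Function.update μ i t l : ℝ) : ℂ) • rankOne (Function.update e i u l) with hG
        have hGF : ∀ l, l ≠ i → G l = F l := by
          intro l hl
          rw [hG, hF]
          simp only [Function.update_of_ne hl]
        have hGi : G i = ((t:ℝ):ℂ) • rankOne u := by
          rw [hG]; simp only [Function.update_self]
        have hmemj : j ∈ Finset.univ.erase i :=
          Finset.mem_erase_of_ne_of_mem hji (Finset.mem_univ j)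
        have hsplitG := Fin.sum_univ_succAbove G j
        have hRHS : ∑ l : Fin k, ((Function.update μ i t ∘ j.succAbove) l : ℂ) •
            rankOne ((Function.update e i u ∘ j.succAbove) l) = (∑ l, G l) - G j := by
          rw [hsplitG]
          simp only [Function.comp, hG]
          abel
        rw [hRHS]
        have hsumG : ∑ l, G l = G i + ∑ l ∈ Finset.univ.erase i, F l := by
          rw [← Finset.add_sum_erase _ G (Finset.mem_univ i)]
          congr 1
          exact Finset.sum_congr rfl fun l hl => hGF l (Finset.ne_of_mem_erase hl)
        have hsumF : ∑ l, F l = F i + ∑ l ∈ Finset.univ.erase i, F l :=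
          (Finset.add_sum_erase _ F (Finset.mem_univ i)).symm
        have hsumFe : ∑ l ∈ Finset.univ.erase i, F l
            = F j + ∑ l ∈ (Finset.univ.erase i).erase j, F l :=
          (Finset.add_sum_erase _ F hmemj).symm
        have hGj : G j = F j := hGF j hji
        have hkey : F i + F j = rankOne x + ((t:ℝ):ℂ) • rankOne u := hop
        calc ∑ l, F l = F i + F j + ∑ l ∈ (Finset.univ.erase i).erase j, F l := by
              rw [hsumF, hsumFe]; abel
        _ = rankOne x + (((t:ℝ):ℂ) • rankOne u + ∑ l ∈ (Finset.univ.erase i).erase j, F l) := by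
              rw [hkey]; abel
        _ = rankOne x + ((∑ l, G l) - G j) := by
              rw [hsumG, hGi, hGj, hsumFe]; abel

lemma key_induction : ∀ (k : ℕ) {r : ℕ} (e : Fin r → H) (μ : Fin r → ℝ),
    Orthonormal ℂ e → (∀ i, 0 < μ i) → (∑ i, μ i) = (k : ℝ) → r ≤ k →
    ∃ P : Fin k → (H →L[ℂ] H), (∀ i, IsRankOneProjection (P i)) ∧
      (∑ i, (μ i : ℂ) • rankOne (e i)) = ∑ i, P i := by
  intro k
  induction k with
  | zero =>
    intro r e μ _ _ hsum hr
    have hr0 : r = 0 := Nat.le_zero.mp hr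
    subst hr0
    exact ⟨Fin.elim0, fun i => i.elim0, by simp⟩
  | succ k ih =>
    intro r e μ hON hpos hsum hr
    match r, e, μ, hON, hpos, hsum, hr with
    | 0, e, μ, hON, hpos, hsum, hr =>
      simp only [Finset.univ_eq_empty, Finset.sum_empty] at hsum
      have h0 : (0:ℝ) < (k:ℝ) + 1 := by positivity
      push_cast at hsum
      exact absurd hsum (by linarith)
    | (n+1), e, μ, hON, hpos, hsum, hr =>
      obtain ⟨r', e', μ', Q, hON', hpos', hsum', hr', hQ, heq⟩ :=
        step e μ hON hpos (by exact_mod_cast hsum) hr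
      obtain ⟨P', hP', heq'⟩ := ih e' μ' hON' hpos' hsum' hr'
      refine ⟨Fin.cons Q P', ?_, ?_⟩
      · intro i
        refine Fin.cases ?_ ?_ i
        · exact hQ
        · intro i'; exact hP' i'
      · rw [Fin.sum_cons, heq, heq']

end Fillmore

/-- Fillmore's theorem (Corollary 2.5): a positive finite-rank operator `A` is a finite sum
of (rank-one) projections if and only if `Tr A` is a nonnegative integer with
`Tr A ≥ rank A`.  The trace is computed with respect to a Hilbert basis `b`. -/
theorem stmt_4 {ι : Type*} (b : HilbertBasis ι ℂ H) (A : H →L[ℂ] H)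
    (hA : A.IsPositive) (hfr : FiniteDimensional ℂ (LinearMap.range (A : H →ₗ[ℂ] H))) :
    (∃ (n : ℕ) (P : Fin n → (H →L[ℂ] H)),
        (∀ i, IsRankOneProjection (P i)) ∧ A = ∑ i, P i) ↔
      ∃ k : ℕ, (∑' i, (⟪b i, A (b i)⟫_ℂ).re) = (k : ℝ) ∧
        Module.finrank ℂ (LinearMap.range (A : H →ₗ[ℂ] H)) ≤ k := by
  constructor
  · rintro ⟨n, P, hP, rfl⟩
    choose x hx hPx using hP
    have hform : ∑ i, P i = ∑ i, (((fun _ => (1:ℝ)) i : ℝ) : ℂ) • rankOne (x i) := by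
      refine Finset.sum_congr rfl fun i _ => ?_
      rw [hPx i]
      push_cast
      rw [one_smul]
    refine ⟨n, ?_, ?_⟩
    · rw [hform]
      rw [trace_diag b (fun _ => (1:ℝ)) x hx]
      simp
    · rw [hform]
      simpa using rank_diag_le (fun _ => (1:ℝ)) x
  · rintro ⟨k, htr, hrk⟩
    obtain ⟨e, μ, hON, hpos, hAeq⟩ := diag_decomp A hA hfr
    have hsum : (∑ i, μ i) = (k : ℝ) := by
      rw [hAeq] at htr
      rw [trace_diag b μ e hON.1] at htr
      exact htr
    obtain ⟨P, hP, heq⟩ := key_induction k e μ hON hpos hsum hrk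
    exact ⟨k, P, hP, by rw [hAeq, heq]⟩
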